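/- Fix vectors a₂ ∈ ℝᵖ, a₃ ∈ ℝᵖ, a₄ ∈ ℝ^q, a₅ ∈ ℝ^q, a₁ ∈ ℝᵐ, scalars a₀, b, matrices Σ₁ (p×p), Σ₂L (q×q'), and η_max > 0. Consider variables (h, M̃, K̃, M̄, K̄, η) with η ∈ [0, η_max]. If both second-order-cone constraints a₀ + a₁ᵀh - b ≥ ‖(Σ₁(M̃ᵀa₂ + η a₃); Σ₂L(K̃ᵀa₄ + η a₅))‖ and a₀ + a₁ᵀh - b ≥ ‖(Σ₁(M̃ᵀa₂ + η_max M̄ᵀa₂ + η a₃); Σ₂L(K̃ᵀa₄ + η_max K̄ᵀa₄ + η a₅))‖ hold, then the constraint a₀ + a₁ᵀh - b ≥ ‖(Σ₁(M̃ᵀa₂ + η M̄ᵀa₂ + η a₃); Σ₂L(K̃ᵀa₄ + η K̄ᵀa₄ + η a₅))‖ also holds. -/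

import Mathlib

open Matrix

noncomputable def stackedNorm {p q : ℕ} (v : Fin p → ℝ) (w : Fin q → ℝ) : ℝ :=
  Real.sqrt (∑ i, v i ^ 2 + ∑ i, w i ^ 2)

lemma stackedNorm_eq {p q : ℕ} (v : Fin p → ℝ) (w : Fin q → ℝ) :
    stackedNorm v w = ‖(WithLp.toLp 2 (Sum.elim v w) : EuclideanSpace ℝ (Fin p ⊕ Fin q))‖ := by
  rw [EuclideanSpace.norm_eq, stackedNorm]
  congr 1
  rw [Fintype.sum_sum_type]
  simp [sq_abs]

lemma stackedNorm_combo {p q : ℕ} (t : ℝ) (v1 v2 : Fin p → ℝ) (w1 w2 : Fin q → ℝ)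
    (ht0 : 0 ≤ t) (ht1 : t ≤ 1) :
    stackedNorm ((1-t) • v1 + t • v2) ((1-t) • w1 + t • w2)
      ≤ (1-t) * stackedNorm v1 w1 + t * stackedNorm v2 w2 := by
  have key : (Sum.elim ((1-t) • v1 + t • v2) ((1-t) • w1 + t • w2) : Fin p ⊕ Fin q → ℝ)
      = (1-t) • Sum.elim v1 w1 + t • Sum.elim v2 w2 := by
    ext (i | i) <;> simp
  rw [stackedNorm_eq, stackedNorm_eq, stackedNorm_eq, key, WithLp.toLp_add, WithLp.toLp_smul, WithLp.toLp_smul]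
  refine (norm_add_le _ _).trans (le_of_eq ?_)
  rw [norm_smul, norm_smul, Real.norm_eq_abs, Real.norm_eq_abs,
    abs_of_nonneg (by linarith), abs_of_nonneg ht0]

theorem soc_endpoint_implies_bilinear_constraint
    (p q q' m : ℕ)
    (a2 a3 : Fin p → ℝ) (a4 a5 : Fin q → ℝ) (a1 : Fin m → ℝ)
    (a0 b : ℝ)
    (S1 : Matrix (Fin p) (Fin p) ℝ) (S2L : Matrix (Fin q') (Fin q) ℝ)
    (ηmax : ℝ) (hηmax : 0 < ηmax)
    (h : Fin m → ℝ)
    (Mt Mb : Matrix (Fin p) (Fin p) ℝ)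
    (Kt Kb : Matrix (Fin q) (Fin q) ℝ)
    (η : ℝ) (hη : η ∈ Set.Icc (0:ℝ) ηmax)
    (hsoc1 : stackedNorm (S1 *ᵥ (Mtᵀ *ᵥ a2 + η • a3)) (S2L *ᵥ (Ktᵀ *ᵥ a4 + η • a5))
        ≤ a0 + a1 ⬝ᵥ h - b)
    (hsoc2 : stackedNorm (S1 *ᵥ (Mtᵀ *ᵥ a2 + ηmax • (Mbᵀ *ᵥ a2) + η • a3))
                         (S2L *ᵥ (Ktᵀ *ᵥ a4 + ηmax • (Kbᵀ *ᵥ a4) + η • a5))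
        ≤ a0 + a1 ⬝ᵥ h - b) :
    stackedNorm (S1 *ᵥ (Mtᵀ *ᵥ a2 + η • (Mbᵀ *ᵥ a2) + η • a3))
                (S2L *ᵥ (Ktᵀ *ᵥ a4 + η • (Kbᵀ *ᵥ a4) + η • a5))
      ≤ a0 + a1 ⬝ᵥ h - b := by
  obtain ⟨hη0, hη1⟩ := hη
  set t : ℝ := η / ηmax with ht
  have ht0 : 0 ≤ t := div_nonneg hη0 hηmax.le
  have ht1 : t ≤ 1 := (div_le_one hηmax).mpr hη1
  have htη : t * ηmax = η := div_mul_cancel₀ η hηmax.ne'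
  have hx : (Mtᵀ *ᵥ a2 + η • (Mbᵀ *ᵥ a2) + η • a3)
      = (1-t) • (Mtᵀ *ᵥ a2 + η • a3) + t • (Mtᵀ *ᵥ a2 + ηmax • (Mbᵀ *ᵥ a2) + η • a3) := by
    ext i
    simp only [Pi.add_apply, Pi.smul_apply, smul_eq_mul]
    linear_combination (Mbᵀ *ᵥ a2) i * htη.symm
  have hy : (Ktᵀ *ᵥ a4 + η • (Kbᵀ *ᵥ a4) + η • a5)
      = (1-t) • (Ktᵀ *ᵥ a4 + η • a5) + t • (Ktᵀ *ᵥ a4 + ηmax • (Kbᵀ *ᵥ a4) + η • a5) := by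
    ext i
    simp only [Pi.add_apply, Pi.smul_apply, smul_eq_mul]
    linear_combination (Kbᵀ *ᵥ a4) i * htη.symm
  have hv : S1 *ᵥ (Mtᵀ *ᵥ a2 + η • (Mbᵀ *ᵥ a2) + η • a3)
      = (1-t) • (S1 *ᵥ (Mtᵀ *ᵥ a2 + η • a3))
        + t • (S1 *ᵥ (Mtᵀ *ᵥ a2 + ηmax • (Mbᵀ *ᵥ a2) + η • a3)) := by
    rw [hx, mulVec_add, mulVec_smul, mulVec_smul]
  have hw : S2L *ᵥ (Ktᵀ *ᵥ a4 + η • (Kbᵀ *ᵥ a4) + η • a5)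
      = (1-t) • (S2L *ᵥ (Ktᵀ *ᵥ a4 + η • a5))
        + t • (S2L *ᵥ (Ktᵀ *ᵥ a4 + ηmax • (Kbᵀ *ᵥ a4) + η • a5)) := by
    rw [hy, mulVec_add, mulVec_smul, mulVec_smul]
  rw [hv, hw]
  calc stackedNorm _ _ ≤ (1-t) * stackedNorm (S1 *ᵥ (Mtᵀ *ᵥ a2 + η • a3)) (S2L *ᵥ (Ktᵀ *ᵥ a4 + η • a5))
        + t * stackedNorm (S1 *ᵥ (Mtᵀ *ᵥ a2 + ηmax • (Mbᵀ *ᵥ a2) + η • a3))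
            (S2L *ᵥ (Ktᵀ *ᵥ a4 + ηmax • (Kbᵀ *ᵥ a4) + η • a5)) :=
      stackedNorm_combo t _ _ _ _ ht0 ht1
    _ ≤ (1-t) * (a0 + a1 ⬝ᵥ h - b) + t * (a0 + a1 ⬝ᵥ h - b) := by
        gcongr <;> linarith
    _ = a0 + a1 ⬝ᵥ h - b := by ring
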